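/- Let a be an integer and m a positive integer, with the recursion d₀ = gcd(a,m), mᵢ = m₍ᵢ₋₁₎/dᵢ, d₍ᵢ₊₁₎ = gcd(dᵢ, mᵢ) and s least with d_s = 1. Then gcd(a, m_s) = 1. -/
import Mathlib


def dm (a : ℤ) (m : ℕ) : ℕ → ℕ × ℕ
  | 0 => (Int.gcd a m, m / Int.gcd a m)
  | i + 1 =>
      let p := dm a m i
      let d := Nat.gcd p.1 p.2
      (d, p.2 / d)

lemma dm_facts (a : ℤ) (m : ℕ) (hm : 0 < m) :
    ∀ i, 0 < (dm a m i).2 ∧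
      ∀ p : ℕ, p.Prime → p ∣ a.natAbs → p ∣ (dm a m i).2 → p ∣ (dm a m i).1 := by
  intro i
  induction i with
  | zero =>
    have hg : Int.gcd a m = Nat.gcd a.natAbs m := by simp [Int.gcd]
    have hd0 : 0 < Int.gcd a m := by
      rw [hg]; exact Nat.gcd_pos_of_pos_right _ hm
    have hdvd : Int.gcd a m ∣ m := by rw [hg]; exact Nat.gcd_dvd_right _ _
    constructor
    · show 0 < m / Int.gcd a m
      exact Nat.div_pos (Nat.le_of_dvd hm hdvd) hd0
    · intro p hp hpa hpm
      have h1 : (m / Int.gcd a m) ∣ m := Nat.div_dvd_of_dvd hdvd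
      have h2 : p ∣ m := hpm.trans h1
      show p ∣ Int.gcd a m
      rw [hg]; exact Nat.dvd_gcd hpa h2
  | succ i ih =>
    obtain ⟨hpos, hprev⟩ := ih
    have hdpos : 0 < Nat.gcd (dm a m i).1 (dm a m i).2 :=
      Nat.gcd_pos_of_pos_right _ hpos
    have hdvd : Nat.gcd (dm a m i).1 (dm a m i).2 ∣ (dm a m i).2 :=
      Nat.gcd_dvd_right _ _
    constructor
    · show 0 < (dm a m i).2 / Nat.gcd (dm a m i).1 (dm a m i).2
      exact Nat.div_pos (Nat.le_of_dvd hpos hdvd) hdpos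
    · intro p hp hpa hpm
      have h1 : ((dm a m i).2 / Nat.gcd (dm a m i).1 (dm a m i).2) ∣ (dm a m i).2 :=
        Nat.div_dvd_of_dvd hdvd
      have h2 : p ∣ (dm a m i).2 := hpm.trans h1
      have h3 : p ∣ (dm a m i).1 := hprev p hp hpa h2
      show p ∣ Nat.gcd (dm a m i).1 (dm a m i).2
      exact Nat.dvd_gcd h3 h2

theorem stmt17 (a : ℤ) (m : ℕ) (hm : 0 < m) (s : ℕ)
    (hs : (dm a m s).1 = 1) (hleast : ∀ t < s, (dm a m t).1 ≠ 1) :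
    Int.gcd a ((dm a m s).2 : ℤ) = 1 := by
  obtain ⟨hpos, hpr⟩ := dm_facts a m hm s
  have hg : Int.gcd a ((dm a m s).2 : ℤ) = Nat.gcd a.natAbs (dm a m s).2 := by
    simp [Int.gcd]
  rw [hg]
  by_contra h
  obtain ⟨p, hp, hpd⟩ := Nat.exists_prime_and_dvd h
  have hpa : p ∣ a.natAbs := hpd.trans (Nat.gcd_dvd_left _ _)
  have hpm : p ∣ (dm a m s).2 := hpd.trans (Nat.gcd_dvd_right _ _)
  have := hpr p hp hpa hpm
  rw [hs] at this
  exact hp.one_lt.ne' (Nat.eq_one_of_dvd_one this)
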